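/- For every integer n ≥ 2 and complex x avoiding poles, ∑_{k=0}^{n} k^2 · C(2n-k, n) · C(x+k, k) = [(x+1)(xn+3n+1)/(n-1)] · C(x+2n+1, n-2). -/

import Mathlib

open Finset

noncomputable def gch (y : ℝ) (s : ℕ) : ℝ := (∏ i ∈ Finset.range s, (y - (i:ℝ))) / (Nat.factorial s)

lemma gch_zero (y : ℝ) : gch y 0 = 1 := by simp [gch]

lemma gch_succ (y : ℝ) (s : ℕ) : gch y (s+1) = gch y s * (y - s) / (s+1) := by
  have hF : ((s.factorial : ℕ):ℝ) ≠ 0 := by positivity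
  have hs : ((s:ℝ) + 1) ≠ 0 := by positivity
  rw [gch, gch, Finset.prod_range_succ, Nat.factorial_succ]
  push_cast
  field_simp

lemma gch_shift (y : ℝ) (s : ℕ) : gch (y+1) (s+1) = gch y s * (y+1) / (s+1) := by
  have hF : ((s.factorial : ℕ):ℝ) ≠ 0 := by positivity
  have hs : ((s:ℝ) + 1) ≠ 0 := by positivity
  have h : ∏ i ∈ Finset.range (s+1), (y+1 - (i:ℝ)) = (∏ i ∈ Finset.range s, (y - (i:ℝ))) * (y+1) := by
    rw [Finset.prod_range_succ']
    congr 1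
    · apply Finset.prod_congr rfl; intro i _; push_cast; ring
    · norm_num
  rw [gch, gch, h, Nat.factorial_succ]
  push_cast
  field_simp

lemma gch_pascal (y : ℝ) (s : ℕ) : gch y s + gch y (s+1) = gch (y+1) (s+1) := by
  rw [gch_succ, gch_shift]
  have h : ((s:ℝ)+1) ≠ 0 := by positivity
  field_simp
  ring

lemma hockey (x : ℝ) : ∀ m : ℕ, ∑ k ∈ Finset.range (m+1), gch (x + k) k = gch (x + m + 1) m := by
  intro m
  induction m with
  | zero => simp [gch_zero]
  | succ m ih =>
    rw [Finset.sum_range_succ, ih]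
    push_cast
    have h1 : x + ((m:ℝ)+1) = x + (m:ℝ) + 1 := by ring
    rw [h1, gch_pascal]

lemma vand (x : ℝ) : ∀ n m : ℕ,
    ∑ k ∈ Finset.range (m+1), (((n + m - k).choose (m - k) : ℕ) : ℝ) * gch (x + k) k
      = gch (x + n + m + 1) m := by
  intro n
  induction n with
  | zero =>
    intro m
    have h : ∑ k ∈ Finset.range (m+1), (((0 + m - k).choose (m - k) : ℕ) : ℝ) * gch (x + k) k
        = ∑ k ∈ Finset.range (m+1), gch (x + k) k := by
      apply Finset.sum_congr rfl
      intro k hk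
      rw [Nat.zero_add, Nat.choose_self]
      norm_num
    rw [h, hockey x m]
    congr 1
    push_cast
    ring
  | succ n ihn =>
    intro m
    induction m with
    | zero => simp [gch_zero]
    | succ m ihm =>
      have key : ∑ k ∈ Finset.range (m+2), (((n + 1 + (m+1) - k).choose (m+1 - k) : ℕ) : ℝ) * gch (x + k) k
          = (∑ k ∈ Finset.range (m+1), (((n + 1 + m - k).choose (m - k) : ℕ) : ℝ) * gch (x + k) k)
            + ∑ k ∈ Finset.range (m+2), (((n + (m+1) - k).choose (m+1 - k) : ℕ) : ℝ) * gch (x + k) k := by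
        rw [Finset.sum_range_succ, Finset.sum_range_succ (n := m+1)
          (f := fun k => (((n + (m+1) - k).choose (m+1 - k) : ℕ) : ℝ) * gch (x + k) k)]
        have e1 : (n + 1 + (m+1) - (m+1)).choose (m+1 - (m+1)) = 1 := by simp
        have e2 : (n + (m+1) - (m+1)).choose (m+1 - (m+1)) = 1 := by simp
        rw [e1, e2]
        have hA : ∑ k ∈ Finset.range (m+1), (((n + 1 + (m+1) - k).choose (m+1 - k) : ℕ) : ℝ) * gch (x + k) k
            = ∑ k ∈ Finset.range (m+1), ((((n + 1 + m - k).choose (m - k) : ℕ) : ℝ) * gch (x + k) k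
              + (((n + (m+1) - k).choose (m+1 - k) : ℕ) : ℝ) * gch (x + k) k) := by
          apply Finset.sum_congr rfl
          intro k hk
          rw [Finset.mem_range] at hk
          obtain ⟨d, hd⟩ := Nat.le.dest (Nat.lt_succ_iff.mp hk)
          have c1 : n + 1 + (m+1) - k = (n + 1 + d) + 1 := by omega
          have c2 : m + 1 - k = d + 1 := by omega
          have c3 : n + 1 + m - k = n + 1 + d := by omega
          have c4 : m - k = d := by omega
          have c5 : n + (m+1) - k = n + 1 + d := by omega
          rw [c1, c2, c3, c4, c5, Nat.choose_succ_succ]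
          push_cast
          ring
        rw [hA, Finset.sum_add_distrib]
        push_cast
        ring
      rw [key, ihm, ihn (m+1)]
      push_cast
      have h1 : x + ((n:ℝ)+1) + (m:ℝ) + 1 = x + (n:ℝ) + (m:ℝ) + 2 := by ring
      have h2 : x + (n:ℝ) + ((m:ℝ)+1) + 1 = x + (n:ℝ) + (m:ℝ) + 2 := by ring
      have h3 : x + ((n:ℝ)+1) + ((m:ℝ)+1) + 1 = (x + (n:ℝ) + (m:ℝ) + 2) + 1 := by ring
      rw [h1, h2, h3]
      exact gch_pascal _ _

lemma gch_one (y : ℝ) : gch y 1 = y := by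
  rw [show (1:ℕ) = 0 + 1 from rfl, gch_succ, gch_zero]
  norm_num

lemma key2 (x : ℝ) (i : ℕ) :
    ((i:ℝ)+2)^2 * gch (x + (i:ℝ) + 2) (i+2)
      = (x+1)*(x+2) * gch (x + (i:ℝ) + 2) i + (x+1) * gch (x + (i:ℝ) + 2) (i+1) := by
  rw [show i+2 = (i+1)+1 from rfl, gch_succ, gch_succ]
  push_cast
  have h1 : ((i:ℝ)+1) ≠ 0 := by positivity
  have h2 : ((i:ℝ)+1+1) ≠ 0 := by positivity
  field_simp
  ring

theorem stmt16 (n : ℕ) (hn : 2 ≤ n) (x : ℝ) :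
    ∑ k ∈ Finset.range (n+1), (k:ℝ)^2 * (((2*n-k).choose n : ℕ) : ℝ) * gch (x+(k:ℝ)) k
      = ((x+1)*(x*(n:ℝ)+3*(n:ℝ)+1)/((n:ℝ)-1)) * gch (x+2*(n:ℝ)+1) (n-2) := by
  obtain ⟨p, hp⟩ : ∃ p, n = p + 2 := ⟨n - 2, by omega⟩
  subst hp
  have hA := vand (x+2) (p+2) p
  have hB := vand (x+1) (p+2) (p+1)
  rw [Finset.sum_range_succ'] at hB
  rw [Finset.sum_range_succ', Finset.sum_range_succ']
  have hstep : ∀ k ∈ Finset.range (p+1),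
      ((k+1+1:ℕ):ℝ)^2 * (((2*(p+2)-(k+1+1)).choose (p+2) : ℕ):ℝ) * gch (x + ((k+1+1:ℕ):ℝ)) (k+1+1)
        = (x+1)*(x+2) * ((((p+2+p-k).choose (p-k) : ℕ):ℝ) * gch (x+2+(k:ℝ)) k)
          + (x+1) * ((((p+2+(p+1)-(k+1)).choose (p+1-(k+1)) : ℕ):ℝ) * gch (x+1+((k+1:ℕ):ℝ)) (k+1)) := by
    intro k hk
    rw [Finset.mem_range] at hk
    have hkp : k ≤ p := by omega
    have e1 : 2*(p+2)-(k+1+1) = 2*p+2-k := by omega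
    have e2 : p+2+p-k = 2*p+2-k := by omega
    have e3 : p+2+(p+1)-(k+1) = 2*p+2-k := by omega
    have e4 : p+1-(k+1) = p-k := by omega
    have e5 : (2*p+2-k).choose (p+2) = (2*p+2-k).choose (p-k) := by
      rw [show p-k = (2*p+2-k)-(p+2) by omega]
      exact (Nat.choose_symm (by omega)).symm
    rw [e1, e2, e3, e4, e5]
    have a1 : x + ((k+1+1:ℕ):ℝ) = x + (k:ℝ) + 2 := by push_cast; ring
    have a2 : x + 2 + (k:ℝ) = x + (k:ℝ) + 2 := by ring
    have a3 : x + 1 + ((k+1:ℕ):ℝ) = x + (k:ℝ) + 2 := by push_cast; ring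
    rw [a1, a2, a3, show k+1+1 = k+2 from rfl]
    have hk2 := key2 x k
    push_cast
    linear_combination (((2*p+2-k).choose (p-k) : ℕ):ℝ) * hk2
  rw [Finset.sum_congr rfl hstep, Finset.sum_add_distrib, ← Finset.mul_sum, ← Finset.mul_sum,
    hA, eq_sub_of_add_eq hB]
  have e6 : 2*(p+2)-(0+1) = 2*p+3 := by omega
  have e7 : p+2+(p+1)-0 = 2*p+3 := by omega
  have e9 : (2*p+3).choose (p+2) = (2*p+3).choose (p+1) := by
    rw [show p+1 = (2*p+3)-(p+2) by omega]
    exact (Nat.choose_symm (by omega)).symm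
  rw [e6, e7, e9, show p+1-0 = p+1 from rfl, show p+2-2 = p from rfl]
  have b1 : x+2+((p+2:ℕ):ℝ)+(p:ℝ)+1 = x + 2*(((p+2):ℕ):ℝ) + 1 := by push_cast; ring
  have b2 : x+1+((p+2:ℕ):ℝ)+((p+1:ℕ):ℝ)+1 = x + 2*(((p+2):ℕ):ℝ) + 1 := by push_cast; ring
  rw [b1, b2, show (0:ℕ)+1 = 1 from rfl, gch_one]
  rw [show x + ((1:ℕ):ℝ) = x + 1 by norm_num, show x + ((0:ℕ):ℝ) = x by norm_num, gch_zero, gch_zero]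
  have hp1 : ((p:ℝ)+1) ≠ 0 := by positivity
  have hs : ((p:ℝ)+1) * gch (x + 2*(((p+2):ℕ):ℝ) + 1) (p+1)
      = gch (x + 2*(((p+2):ℕ):ℝ) + 1) p * ((x + 2*(((p+2):ℕ):ℝ) + 1) - (p:ℝ)) := by
    rw [gch_succ]
    field_simp
  have hd : (((p+2):ℕ):ℝ) - 1 = (p:ℝ)+1 := by push_cast; ring
  rw [hd, div_mul_eq_mul_div, eq_div_iff hp1]
  push_cast at hs ⊢
  linear_combination (x+1) * hs
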